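/- Let n ≥ 1 and let ρ be a positive semidefinite complex matrix indexed by Fin 2 × Fin n. Let V be the span of the eigenvectors of the Hermitian matrix ρ^{T_A} corresponding to its strictly negative eigenvalues. Then V contains no nonzero product vector e ⊗ f (with (e ⊗ f)(i,k) = e(i)·f(k)). -/

import Mathlib

open Matrix
open scoped ComplexOrder

noncomputable section

/-- Partial transpose with respect to the first (qubit) factor. -/
def ptA {n : ℕ} (ρ : Matrix (Fin 2 × Fin n) (Fin 2 × Fin n) ℂ) :
    Matrix (Fin 2 × Fin n) (Fin 2 × Fin n) ℂ :=
  fun p q => ρ (q.1, p.2) (p.1, q.2)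

/-- The product vector `e ⊗ f`. -/
def prodVec {n : ℕ} (e : Fin 2 → ℂ) (f : Fin n → ℂ) : Fin 2 × Fin n → ℂ :=
  fun p => e p.1 * f p.2

/-- The partial transpose of a Hermitian matrix is Hermitian. -/
lemma ptA_isHermitian {n : ℕ} {ρ : Matrix (Fin 2 × Fin n) (Fin 2 × Fin n) ℂ}
    (hρ : ρ.IsHermitian) : (ptA ρ).IsHermitian := by
  ext p q
  have := congrFun (congrFun hρ (q.1, p.2)) (p.1, q.2)
  simpa [Matrix.conjTranspose_apply, ptA] using this

/-- The quadratic form of `ptA ρ` at a product vector equals the quadratic form of `ρ`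
at the partially conjugated product vector. -/
lemma ptA_quadform_prodVec {n : ℕ} (ρ : Matrix (Fin 2 × Fin n) (Fin 2 × Fin n) ℂ)
    (e : Fin 2 → ℂ) (f : Fin n → ℂ) :
    star (prodVec e f) ⬝ᵥ (ptA ρ *ᵥ prodVec e f)
      = star (prodVec (star e) f) ⬝ᵥ (ρ *ᵥ prodVec (star e) f) := by
  classical
  simp only [dotProduct, Matrix.mulVec, Finset.mul_sum]
  rw [← Finset.sum_product', ← Finset.sum_product']
  refine Fintype.sum_equiv
    ⟨fun x => ((x.2.1, x.1.2), (x.1.1, x.2.2)), fun x => ((x.2.1, x.1.2), (x.1.1, x.2.2)),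
      fun ⟨⟨a, b⟩, ⟨c, d⟩⟩ => rfl, fun ⟨⟨a, b⟩, ⟨c, d⟩⟩ => rfl⟩ _ _ ?_
  rintro ⟨⟨i, k⟩, ⟨j, l⟩⟩
  simp only [Equiv.coe_fn_mk, ptA, prodVec, Pi.star_apply, star_mul', star_star]
  ring

/-- The span of the eigenvectors of `ρ^{T_A}` corresponding to strictly negative
eigenvalues contains no nonzero product vector. -/
theorem negSpan_no_prodVec {n : ℕ} (hn : 1 ≤ n)
    (ρ : Matrix (Fin 2 × Fin n) (Fin 2 × Fin n) ℂ) (hρ : ρ.PosSemidef)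
    (V : Submodule ℂ (Fin 2 × Fin n → ℂ))
    (hV : V = Submodule.span ℂ
      {v : Fin 2 × Fin n → ℂ | v ≠ 0 ∧ ∃ μ : ℝ, μ < 0 ∧ ptA ρ *ᵥ v = (μ : ℂ) • v})
    (e : Fin 2 → ℂ) (f : Fin n → ℂ) (hmem : prodVec e f ∈ V) :
    prodVec e f = 0 := by
  classical
  by_contra hz0
  set A := ptA ρ with hA
  have hAH : A.IsHermitian := ptA_isHermitian hρ.1
  set z := prodVec e f with hzdef
  -- the negative eigenspaces
  let E : {μ : ℝ // μ < 0} → Submodule ℂ (Fin 2 × Fin n → ℂ) := fun μ =>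
    { carrier := {v | A *ᵥ v = (μ.1 : ℂ) • v}
      add_mem' := fun ha hb => by
        simp only [Set.mem_setOf_eq] at *
        rw [Matrix.mulVec_add, ha, hb, smul_add]
      zero_mem' := by simp [Set.mem_setOf_eq]
      smul_mem' := fun r a ha => by
        simp only [Set.mem_setOf_eq] at *
        rw [Matrix.mulVec_smul, ha, smul_comm] }
  have hspan : V ≤ ⨆ μ, E μ := by
    rw [hV]
    refine Submodule.span_le.2 ?_
    rintro v ⟨hv0, μ, hμ, hvA⟩
    exact Submodule.mem_iSup_of_mem ⟨μ, hμ⟩ hvA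
  obtain ⟨c, hc, hsum⟩ := (Submodule.mem_iSup_iff_exists_finsupp E z).1 (hspan hmem)
  have hzsum : z = ∑ i ∈ c.support, c i := by rw [← hsum]; rfl
  -- the bilinear map x, y ↦ x ⬝ᵥ (A *ᵥ y)
  let L : (Fin 2 × Fin n → ℂ) →ₗ[ℂ] (Fin 2 × Fin n → ℂ) →ₗ[ℂ] ℂ :=
    { toFun := fun x =>
        { toFun := fun y => x ⬝ᵥ (A *ᵥ y)
          map_add' := fun a b => by
            show x ⬝ᵥ (A *ᵥ (a + b)) = x ⬝ᵥ (A *ᵥ a) + x ⬝ᵥ (A *ᵥ b)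
            rw [Matrix.mulVec_add, dotProduct_add]
          map_smul' := fun r a => by
            show x ⬝ᵥ (A *ᵥ (r • a)) = r • (x ⬝ᵥ (A *ᵥ a))
            rw [Matrix.mulVec_smul, dotProduct_smul] }
      map_add' := fun a b => by ext y; simp [add_dotProduct]
      map_smul' := fun r a => by ext y; simp [smul_dotProduct] }
  -- orthogonality of distinct eigenspaces
  have horth : ∀ i j : {μ : ℝ // μ < 0}, i ≠ j → star (c i) ⬝ᵥ c j = 0 := by
    intro i j hij
    have hcj : A *ᵥ c j = (j.1 : ℂ) • c j := hc j
    have hci : A *ᵥ c i = (i.1 : ℂ) • c i := hc i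
    have h1 : star (c i) ⬝ᵥ (A *ᵥ c j) = (j.1 : ℂ) * (star (c i) ⬝ᵥ c j) := by
      rw [hcj, dotProduct_smul, smul_eq_mul]
    have h2 : star (c i) ⬝ᵥ (A *ᵥ c j) = (i.1 : ℂ) * (star (c i) ⬝ᵥ c j) := by
      rw [Matrix.dotProduct_mulVec]
      have : star (c i) ᵥ* A = (i.1 : ℂ) • star (c i) := by
        have := congrArg star hci
        rw [Matrix.star_mulVec, hAH.eq, star_smul] at this
        simpa using this
      rw [this, smul_dotProduct, smul_eq_mul]
    have hsub : ((i.1 : ℂ) - (j.1 : ℂ)) * (star (c i) ⬝ᵥ c j) = 0 := by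
      rw [sub_mul, ← h1, ← h2, sub_self]
    rcases mul_eq_zero.1 hsub with h | h
    · exfalso
      have : (i.1 : ℂ) = (j.1 : ℂ) := sub_eq_zero.1 h
      exact hij (Subtype.ext (by exact_mod_cast this))
    · exact h
  -- expand the quadratic form
  have hQ : star z ⬝ᵥ (A *ᵥ z)
      = ∑ i ∈ c.support, (i.1 : ℂ) * (star (c i) ⬝ᵥ c i) := by
    have hstar : star z = ∑ i ∈ c.support, star (c i) := by
      rw [hzsum, star_sum]
    calc star z ⬝ᵥ (A *ᵥ z) = L (star z) z := rfl
      _ = ∑ i ∈ c.support, ∑ j ∈ c.support, L (star (c i)) (c j) := by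
          rw [hstar, hzsum, map_sum L _ c.support, LinearMap.sum_apply]
          exact Finset.sum_congr rfl fun i _ => map_sum _ _ _
      _ = ∑ i ∈ c.support, (i.1 : ℂ) * (star (c i) ⬝ᵥ c i) := by
          refine Finset.sum_congr rfl fun i hi => ?_
          rw [Finset.sum_eq_single i]
          · show star (c i) ⬝ᵥ (A *ᵥ c i) = _
            rw [hc i, dotProduct_smul, smul_eq_mul]
          · intro j _ hji
            show star (c i) ⬝ᵥ (A *ᵥ c j) = 0
            rw [hc j, dotProduct_smul, smul_eq_mul,
              horth i j (Ne.symm hji), mul_zero]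
          · intro h; exact absurd hi h
  -- nonnegativity from positive semidefiniteness of ρ
  have hQnonneg : 0 ≤ star z ⬝ᵥ (A *ᵥ z) := by
    rw [hzdef, hA, ptA_quadform_prodVec]
    exact hρ.dotProduct_mulVec_nonneg _
  -- strict negativity from the eigenvalue decomposition
  have hne : c.support.Nonempty := by
    rcases Finset.eq_empty_or_nonempty c.support with h | h
    · exfalso; apply hz0; rw [hzsum, h, Finset.sum_empty]
    · exact h
  have hQneg : star z ⬝ᵥ (A *ᵥ z) < 0 := by
    rw [hQ]
    have : ∀ i ∈ c.support, (i.1 : ℂ) * (star (c i) ⬝ᵥ c i) < 0 := by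
      intro i hi
      have hci : c i ≠ 0 := Finsupp.mem_support_iff.1 hi
      have hpos : 0 < star (c i) ⬝ᵥ c i := Matrix.dotProduct_star_self_pos_iff.2 hci
      have hneg : (i.1 : ℂ) < 0 := by
        rw [show (0 : ℂ) = ((0 : ℝ) : ℂ) by norm_num, Complex.real_lt_real]
        exact i.2
      exact mul_neg_of_neg_of_pos hneg hpos
    exact Finset.sum_neg this hne
  exact absurd (hQnonneg.trans_lt hQneg) (lt_irrefl 0)
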